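/- For a supercritical Laplace exponent Ψ with largest root b > 0, Lévy measure π and Gaussian coefficient β, the function Φ(λ) = (Ψ(λ+b) − Ψ(λ))/b satisfies Φ(λ) = 2βλ + ∫₀^∞ (1 − e^{−λx}) (1 − e^{−bx})/b · π(dx); in particular Φ is the Laplace exponent of a subordinator (an immigration mechanism). -/

import Mathlib

open Set MeasureTheory

/-- The Lévy–Khintchine formula for an (unkilled) spectrally positive Laplace exponent
with triplet `(α, β, π)`. -/
noncomputable def laplaceExponent (α β : ℝ) (π : Measure ℝ) (l : ℝ) : ℝ :=
  α * l + β * l ^ 2 +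
    ∫ x, (Real.exp (-l * x) - 1 + (if x ≤ 1 then l * x else 0)) ∂π

/-- For a supercritical Laplace exponent `Ψ` with largest root `b > 0`, the function
`Φ(λ) = (Ψ(λ+b) − Ψ(λ))/b` equals `2βλ + ∫ (1 − e^{−λx})(1 − e^{−bx})/b π(dx)`; in
particular `Φ` is the Laplace exponent of a subordinator (its Lévy measure
`(1 − e^{−bx})/b · π(dx)` integrates `1 ∧ x`). -/
lemma exp_aux_lower {t : ℝ} (ht : 0 ≤ t) : 0 ≤ Real.exp (-t) - 1 + t := by
  have := Real.add_one_le_exp (-t); linarith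

lemma exp_aux_upper {t : ℝ} (ht : 0 ≤ t) : Real.exp (-t) - 1 + t ≤ t ^ 2 := by
  rcases le_or_gt t 1 with h | h
  · have h1 : |(-t)| ≤ 1 := by rw [abs_neg, abs_of_nonneg ht]; exact h
    have := Real.abs_exp_sub_one_sub_id_le h1
    have h2 : |Real.exp (-t) - 1 + t| ≤ t ^ 2 := by
      simpa [sub_neg_eq_add, neg_pow] using this
    exact (abs_le.mp h2).2
  · have h1 : Real.exp (-t) ≤ 1 := Real.exp_le_one_iff.mpr (by linarith)
    nlinarith

lemma integrable_min_sq (π : Measure ℝ)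
    (hπ : ∫⁻ x, ENNReal.ofReal (min 1 (x ^ 2)) ∂π < ⊤) :
    Integrable (fun x => min 1 (x ^ 2)) π := by
  refine ⟨(measurable_const.min (measurable_id.pow_const 2)).aestronglyMeasurable, ?_⟩
  show ∫⁻ x, (‖min 1 (x ^ 2)‖₊ : ENNReal) ∂π < ⊤
  calc ∫⁻ x, (‖min 1 (x ^ 2)‖₊ : ENNReal) ∂π
      = ∫⁻ x, ENNReal.ofReal (min 1 (x ^ 2)) ∂π := by
        refine lintegral_congr fun x => ?_
        exact Real.enorm_eq_ofReal (le_min zero_le_one (sq_nonneg x))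
    _ < ⊤ := hπ

lemma integrable_levy (π : Measure ℝ) (hsupp : π (Iic 0) = 0)
    (hπ : ∫⁻ x, ENNReal.ofReal (min 1 (x ^ 2)) ∂π < ⊤)
    {l : ℝ} (hl : 0 ≤ l) :
    Integrable (fun x => Real.exp (-l * x) - 1 + (if x ≤ 1 then l * x else 0)) π := by
  have hpos : ∀ᵐ x ∂π, 0 < x := by
    rw [ae_iff]
    simpa [not_lt, Set.Iic] using hsupp
  have hmeas : AEStronglyMeasurable
      (fun x => Real.exp (-l * x) - 1 + (if x ≤ 1 then l * x else 0)) π := by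
    apply Measurable.aestronglyMeasurable
    apply Measurable.add
    · exact (Real.measurable_exp.comp (measurable_id.const_mul (-l))).sub measurable_const
    · exact Measurable.ite measurableSet_Iic (measurable_id.const_mul l) measurable_const
  refine ((integrable_min_sq π hπ).const_mul (max (l ^ 2) 1)).mono' hmeas ?_
  filter_upwards [hpos] with x hx
  rcases le_or_gt x 1 with hx1 | hx1
  · have ht : 0 ≤ l * x := mul_nonneg hl hx.le
    have h1 := exp_aux_lower ht
    have h2 := exp_aux_upper ht
    rw [Real.norm_eq_abs, if_pos hx1, abs_of_nonneg (by simpa [neg_mul] using h1)]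
    have hxx : min 1 (x ^ 2) = x ^ 2 := min_eq_right (by nlinarith)
    have : Real.exp (-(l * x)) - 1 + l * x ≤ l ^ 2 * x ^ 2 := by nlinarith [h2]
    rw [hxx]
    calc Real.exp (-l * x) - 1 + l * x ≤ l ^ 2 * x ^ 2 := by simpa [neg_mul] using this
      _ ≤ max (l ^ 2) 1 * x ^ 2 := by nlinarith [le_max_left (l ^ 2) 1, sq_nonneg x]
  · have ht : 0 ≤ l * x := mul_nonneg hl hx.le
    have h1 : Real.exp (-(l * x)) ≤ 1 := Real.exp_le_one_iff.mpr (by linarith)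
    have h0 : 0 < Real.exp (-(l * x)) := Real.exp_pos _
    rw [Real.norm_eq_abs, if_neg (not_le.mpr hx1)]
    have hxx : min 1 (x ^ 2) = 1 := min_eq_left (by nlinarith)
    rw [hxx, mul_one]
    have : |Real.exp (-l * x) - 1 + 0| ≤ 1 := by
      rw [add_zero, abs_le]
      constructor <;> simp [neg_mul] <;> nlinarith
    calc |Real.exp (-l * x) - 1 + 0| ≤ 1 := this
      _ ≤ max (l ^ 2) 1 := le_max_right _ _

theorem immigration_mechanism_formula (α β : ℝ) (π : Measure ℝ)
    (hβ : 0 ≤ β)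
    (hsupp : π (Iic 0) = 0)
    (hπ : ∫⁻ x, ENNReal.ofReal (min 1 (x ^ 2)) ∂π < ⊤)
    (b : ℝ) (hb : 0 < b) (hbroot : laplaceExponent α β π b = 0)
    (hbmax : ∀ x : ℝ, 0 ≤ x → laplaceExponent α β π x = 0 → x ≤ b) :
    (∀ l : ℝ, 0 ≤ l →
      (laplaceExponent α β π (l + b) - laplaceExponent α β π l) / b =
        2 * β * l +
          ∫ x, (1 - Real.exp (-l * x)) * (1 - Real.exp (-b * x)) / b ∂π) ∧
    ∫⁻ x, ENNReal.ofReal (min 1 x * (1 - Real.exp (-b * x)) / b) ∂π < ⊤ := by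
  constructor
  · intro l hl
    have hIl := integrable_levy π hsupp hπ hl
    have hIb := integrable_levy π hsupp hπ hb.le
    have hIlb := integrable_levy π hsupp hπ (add_nonneg hl hb.le)
    have hfun : (fun x => (1 - Real.exp (-l * x)) * (1 - Real.exp (-b * x))) =
        fun x => (Real.exp (-(l + b) * x) - 1 + (if x ≤ 1 then (l + b) * x else 0)) -
          (Real.exp (-l * x) - 1 + (if x ≤ 1 then l * x else 0)) -
          (Real.exp (-b * x) - 1 + (if x ≤ 1 then b * x else 0)) := by
      funext x
      have he : Real.exp (-(l + b) * x) = Real.exp (-l * x) * Real.exp (-b * x) := by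
        rw [← Real.exp_add]; ring_nf
      by_cases hx : x ≤ 1 <;> simp only [if_pos, if_neg, hx, if_true, if_false] <;>
        rw [he] <;> ring
    have hprod : ∫ x, (1 - Real.exp (-l * x)) * (1 - Real.exp (-b * x)) ∂π =
        (∫ x, (Real.exp (-(l + b) * x) - 1 + (if x ≤ 1 then (l + b) * x else 0)) ∂π) -
        (∫ x, (Real.exp (-l * x) - 1 + (if x ≤ 1 then l * x else 0)) ∂π) -
        (∫ x, (Real.exp (-b * x) - 1 + (if x ≤ 1 then b * x else 0)) ∂π) := by
      have hIsub : Integrable (fun x =>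
          (Real.exp (-(l + b) * x) - 1 + (if x ≤ 1 then (l + b) * x else 0)) -
          (Real.exp (-l * x) - 1 + (if x ≤ 1 then l * x else 0))) π := hIlb.sub hIl
      rw [hfun, integral_sub hIsub hIb, integral_sub hIlb hIl]
    have hroot : α * b + β * b ^ 2 +
        ∫ x, (Real.exp (-b * x) - 1 + (if x ≤ 1 then b * x else 0)) ∂π = 0 := hbroot
    have hdiv : ∫ x, (1 - Real.exp (-l * x)) * (1 - Real.exp (-b * x)) / b ∂π =
        (∫ x, (1 - Real.exp (-l * x)) * (1 - Real.exp (-b * x)) ∂π) / b := integral_div b _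
    rw [hdiv, hprod]
    simp only [laplaceExponent]
    set I1 := ∫ x, (Real.exp (-(l + b) * x) - 1 + (if x ≤ 1 then (l + b) * x else 0)) ∂π with hI1
    set I2 := ∫ x, (Real.exp (-l * x) - 1 + (if x ≤ 1 then l * x else 0)) ∂π with hI2
    set I3 := ∫ x, (Real.exp (-b * x) - 1 + (if x ≤ 1 then b * x else 0)) ∂π with hI3
    field_simp
    linear_combination hroot
  · have hpos : ∀ᵐ x ∂π, 0 < x := by
      rw [ae_iff]
      simpa [not_lt, Set.Iic] using hsupp
    have hbound : ∀ᵐ x ∂π, ENNReal.ofReal (min 1 x * (1 - Real.exp (-b * x)) / b) ≤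
        ENNReal.ofReal (max 1 (1 / b)) * ENNReal.ofReal (min 1 (x ^ 2)) := by
      filter_upwards [hpos] with x hx
      rw [← ENNReal.ofReal_mul (le_trans zero_le_one (le_max_left _ _))]
      apply ENNReal.ofReal_le_ofReal
      have hexp : 1 - Real.exp (-b * x) ≤ min 1 (b * x) := by
        have h1 := Real.add_one_le_exp (-b * x)
        have h2 : Real.exp (-b * x) ≤ 1 :=
          Real.exp_le_one_iff.mpr (by nlinarith)
        have h3 : 0 < Real.exp (-b * x) := Real.exp_pos _
        refine le_min (by linarith) (by nlinarith)
      have hexp0 : 0 ≤ 1 - Real.exp (-b * x) := by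
        have h2 : Real.exp (-b * x) ≤ 1 := Real.exp_le_one_iff.mpr (by nlinarith)
        linarith
      rcases le_or_gt x 1 with hx1 | hx1
      · have hm : min 1 x = x := min_eq_right hx1
        have hm2 : min 1 (x ^ 2) = x ^ 2 := min_eq_right (by nlinarith)
        rw [hm, hm2]
        have h4 : 1 - Real.exp (-b * x) ≤ b * x := hexp.trans (min_le_right _ _)
        calc x * (1 - Real.exp (-b * x)) / b ≤ x * (b * x) / b := by gcongr
          _ = x ^ 2 := by field_simp
          _ ≤ max 1 (1 / b) * x ^ 2 := by
              nlinarith [le_max_left 1 (1 / b), sq_nonneg x]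
      · have hm : min 1 x = 1 := min_eq_left hx1.le
        have hm2 : min 1 (x ^ 2) = 1 := min_eq_left (by nlinarith)
        rw [hm, hm2, one_mul, mul_one]
        have h5 : 1 - Real.exp (-b * x) ≤ 1 := hexp.trans (min_le_left _ _)
        calc (1 - Real.exp (-b * x)) / b ≤ 1 / b := by gcongr
          _ ≤ max 1 (1 / b) := le_max_right _ _
    calc ∫⁻ x, ENNReal.ofReal (min 1 x * (1 - Real.exp (-b * x)) / b) ∂π
        ≤ ∫⁻ x, ENNReal.ofReal (max 1 (1 / b)) * ENNReal.ofReal (min 1 (x ^ 2)) ∂π :=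
          lintegral_mono_ae hbound
      _ = ENNReal.ofReal (max 1 (1 / b)) * ∫⁻ x, ENNReal.ofReal (min 1 (x ^ 2)) ∂π :=
          lintegral_const_mul' _ _ ENNReal.ofReal_ne_top
      _ < ⊤ := ENNReal.mul_lt_top ENNReal.ofReal_lt_top hπ
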